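/- arXiv:1906.03619 — 5 statements merged into one kernel-verified Lean document; each statement's English description precedes it below -/
import Mathlib

section
/- With Γ_t(x) := (1 - e^{-2t}x²)⁻¹ · [[e^{3t} - x², x(e^{3t} - 1)],[x(e^{t} - e^{2t}), e^{t} - x² e^{2t}]] and B₀ = diag(3,1), for any x ∈ ℂ with 0 < |x| < 1 the limit lim_{t→∞} exp(-tB₀)·Γ_t(x) does not exist (the (2,2) entry, (e^{-t} - x² e^{t})/(1 - e^{-2t}x²), diverges as t → ∞). -/
open NormedSpace Filter

lemma denom_tendsto (x : ℂ) :
    Tendsto (fun t : ℝ => norm (1 - Complex.exp (-2 * t) * x ^ 2)) atTop (nhds 1) := by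
  have h1 : Tendsto (fun t : ℝ => Real.exp (-2 * t)) atTop (nhds 0) := by
    have h2 : Tendsto (fun t : ℝ => (2:ℝ) * t) atTop atTop :=
      Tendsto.const_mul_atTop two_pos tendsto_id
    rw [show (fun t : ℝ => Real.exp (-2 * t)) = Real.exp ∘ Neg.neg ∘ (fun t : ℝ => 2 * t) from
      by funext t; simp [Function.comp, neg_mul]]
    exact Real.tendsto_exp_atBot.comp (tendsto_neg_atTop_atBot.comp h2)
  have h0 : Tendsto (fun t : ℝ => Complex.exp (-2 * t)) atTop (nhds 0) := by
    have h4 := (Complex.continuous_ofReal.tendsto 0).comp h1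
    have : (fun t : ℝ => Complex.exp (-2 * t)) =
        (Complex.ofReal ∘ fun t : ℝ => Real.exp (-2 * t)) := by
      funext t
      simp [Function.comp, Complex.ofReal_exp]
    rw [this]; simpa using h4
  have h : Tendsto (fun t : ℝ => (1 : ℂ) - Complex.exp (-2 * t) * x ^ 2) atTop (nhds 1) := by
    have := (tendsto_const_nhds (x := (1:ℂ)) (f := atTop (α := ℝ))).sub
      (h0.mul_const (x ^ 2))
    simpa using this
  have := (continuous_norm.tendsto 1).comp h
  simpa [Function.comp_def] using this

lemma num_tendsto (x : ℂ) (hx : 0 < ‖x‖) (a : ℝ → ℂ) (c : ℝ)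
    (ha : Tendsto (fun t => norm (a t)) atTop (nhds c)) :
    Tendsto (fun t : ℝ => norm (a t - x ^ 2 * Complex.exp t)) atTop atTop := by
  have hlow : Tendsto (fun t : ℝ => ‖x‖ ^ 2 * Real.exp t - norm (a t))
      atTop atTop := by
    have h1 : Tendsto (fun t : ℝ => ‖x‖ ^ 2 * Real.exp t) atTop atTop :=
      Tendsto.const_mul_atTop (pow_pos hx 2) Real.tendsto_exp_atTop
    simpa [sub_eq_add_neg] using h1.atTop_add ha.neg
  apply tendsto_atTop_mono _ hlow
  intro t
  have h2 : norm (x ^ 2 * Complex.exp t) = ‖x‖ ^ 2 * Real.exp t := by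
    simp [Complex.norm_exp]
  calc ‖x‖ ^ 2 * Real.exp t - norm (a t)
      = norm (x ^ 2 * Complex.exp t) - norm (a t) := by rw [h2]
    _ ≤ norm (x ^ 2 * Complex.exp t - a t) := by
        exact
          norm_sub_norm_le (x ^ 2 * Complex.exp ↑t) (a t)
    _ = norm (a t - x ^ 2 * Complex.exp t) := by rw [norm_sub_rev]

lemma quot_tendsto (x : ℂ) (hx : 0 < ‖x‖) (a : ℝ → ℂ) (c : ℝ)
    (ha : Tendsto (fun t => norm (a t)) atTop (nhds c)) :
    Tendsto (fun t : ℝ => norm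
        ((a t - x ^ 2 * Complex.exp t) / (1 - Complex.exp (-2 * t) * x ^ 2))) atTop atTop := by
  have hd := denom_tendsto x
  have hinv : Tendsto (fun t : ℝ => (norm (1 - Complex.exp (-2 * t) * x ^ 2))⁻¹)
      atTop (nhds 1) := by simpa using hd.inv₀ one_ne_zero
  have := (num_tendsto x hx a c ha).atTop_mul_pos one_pos hinv
  simpa [norm_div, div_eq_mul_inv] using this


/-- For the semicocycle
`Γ_t(x) = (1 - e^{-2t}x²)⁻¹ • [[e^{3t} - x², x(e^{3t}-1)],[x(e^t - e^{2t}), e^t - x²e^{2t}]]`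
and `B₀ = diag(3,1)`, for `0 < |x| < 1` the limit `lim_{t→∞} exp(-tB₀)·Γ_t(x)` does not
exist; in particular the `(2,2)` entry diverges. -/
theorem stmt_6
    (B₀ : Matrix (Fin 2) (Fin 2) ℂ) (hB₀ : B₀ = Matrix.diagonal ![3, 1])
    (Γ : ℝ → ℂ → Matrix (Fin 2) (Fin 2) ℂ)
    (hΓ : ∀ (t : ℝ) (x : ℂ), Γ t x =
      (1 - Complex.exp (-2 * t) * x ^ 2)⁻¹ •
        !![Complex.exp (3 * t) - x ^ 2, x * (Complex.exp (3 * t) - 1);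
           x * (Complex.exp t - Complex.exp (2 * t)),
           Complex.exp t - x ^ 2 * Complex.exp (2 * t)]) :
    ∀ x : ℂ, 0 < ‖x‖ → ‖x‖ < 1 →
      (¬ ∃ L : Matrix (Fin 2) (Fin 2) ℂ,
          Tendsto (fun t : ℝ => exp (-(t : ℂ) • B₀) * Γ t x) atTop (nhds L)) ∧
      Tendsto (fun t : ℝ => norm
          ((Complex.exp (-t) - x ^ 2 * Complex.exp t) / (1 - Complex.exp (-2 * t) * x ^ 2)))
        atTop atTop := by

  intro x hx _
  have hsecond : Tendsto (fun t : ℝ => norm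
      ((Complex.exp (-t) - x ^ 2 * Complex.exp t) / (1 - Complex.exp (-2 * t) * x ^ 2)))
      atTop atTop := by
    have ha : Tendsto (fun t : ℝ => norm (Complex.exp (-(t:ℂ)))) atTop (nhds 0) := by
      have h1 : Tendsto (fun t : ℝ => Real.exp (-t)) atTop (nhds 0) :=
        Real.tendsto_exp_atBot.comp tendsto_neg_atTop_atBot
      simpa [Complex.norm_exp] using h1
    have := quot_tendsto x hx (fun t => Complex.exp (-(t:ℂ))) 0 ha
    simpa using this
  refine ⟨?_, hsecond⟩
  rintro ⟨L, hL⟩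
  have hentry : Tendsto (fun t : ℝ => (exp (-(t : ℂ) • B₀) * Γ t x) 1 1) atTop
      (nhds (L 1 1)) :=
    tendsto_pi_nhds.mp (tendsto_pi_nhds.mp hL 1) 1
  have habs : Tendsto (fun t : ℝ => norm ((exp (-(t : ℂ) • B₀) * Γ t x) 1 1)) atTop
      (nhds (norm (L 1 1))) :=
    (continuous_norm.tendsto _).comp hentry
  have heq : (fun t : ℝ => norm ((exp (-(t : ℂ) • B₀) * Γ t x) 1 1)) =
      fun t : ℝ => norm
        ((1 - x ^ 2 * Complex.exp t) / (1 - Complex.exp (-2 * t) * x ^ 2)) := by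
    funext t
    have hexp : exp (-(t:ℂ) • B₀) =
        Matrix.diagonal ![Complex.exp (-(3*t)), Complex.exp (-(t:ℂ))] := by
      rw [hB₀, ← Matrix.diagonal_smul, Matrix.exp_diagonal, Pi.exp_def]
      ext i j
      fin_cases i <;> fin_cases j <;>
        simp [Matrix.diagonal, ← Complex.exp_eq_exp_ℂ] <;> ring_nf
    rw [hexp, hΓ, Matrix.diagonal_mul]
    have hval : (((1 - Complex.exp (-2 * t) * x ^ 2)⁻¹ : ℂ) •
        !![Complex.exp (3 * t) - x ^ 2, x * (Complex.exp (3 * t) - 1);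
           x * (Complex.exp t - Complex.exp (2 * t)),
           Complex.exp t - x ^ 2 * Complex.exp (2 * t)]) 1 1 =
        (1 - Complex.exp (-2 * t) * x ^ 2)⁻¹ *
          (Complex.exp t - x ^ 2 * Complex.exp (2 * t)) := by
      simp [Matrix.smul_apply]
    rw [hval]
    congr 1
    have e1 : Complex.exp (-(t:ℂ)) * Complex.exp (t:ℂ) = 1 := by
      rw [← Complex.exp_add]; simp
    have e2 : Complex.exp (-(t:ℂ)) * Complex.exp (2*(t:ℂ)) = Complex.exp (t:ℂ) := by
      rw [← Complex.exp_add]; ring_nf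
    have key : Complex.exp (-(t:ℂ)) * (Complex.exp (t:ℂ) - x ^ 2 * Complex.exp (2*(t:ℂ))) =
        1 - x ^ 2 * Complex.exp (t:ℂ) := by
      rw [mul_sub, e1, mul_left_comm, e2]
    rw [div_eq_mul_inv, mul_comm ((1 - Complex.exp (-2 * (t:ℂ)) * x ^ 2)⁻¹), ← mul_assoc]
    simp only [Matrix.cons_val_one, Matrix.head_cons, Matrix.cons_val_zero]
    rw [key]
  have hdiv : Tendsto (fun t : ℝ => norm ((exp (-(t : ℂ) • B₀) * Γ t x) 1 1))
      atTop atTop := by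
    rw [heq]
    have := quot_tendsto x hx (fun _ => 1) 1 (by simpa using tendsto_const_nhds)
    simpa using this
  exact not_tendsto_atTop_of_tendsto_nhds habs hdiv
end

section
/- Let {F_t} be a semigroup on D, {Γ_t} a semicocycle over it with values in Banach algebra A, B₀ ∈ A. If M(x) := lim_{s→∞} exp(-sB₀) Γ_s(x) exists for all x ∈ D, then M satisfies the intertwining identity M(F_t(x)) · Γ_t(x) = exp(tB₀) · M(x) for all t ≥ 0 and x ∈ D. -/
open NormedSpace Filter

/-- If `M(x) := lim_{s→∞} e^{-sB₀}Γ_s(x)` exists for a semicocycle `{Γ_t}`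
over a semigroup `{F_t}`, then `M(F_t(x))·Γ_t(x) = e^{tB₀}·M(x)` for all `t ≥ 0`, `x`. -/
theorem stmt_10 {A D : Type*} [NormedRing A] [NormedAlgebra ℂ A] [CompleteSpace A]
    (F : ℝ → D → D)
    (hFsg : ∀ t s : ℝ, 0 ≤ t → 0 ≤ s → ∀ x : D, F (t + s) x = F t (F s x))
    (hF0 : ∀ x : D, F 0 x = x)
    (Γ : ℝ → D → A)
    (hΓchain : ∀ t s : ℝ, 0 ≤ t → 0 ≤ s → ∀ x : D, Γ t (F s x) * Γ s x = Γ (t + s) x)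
    (hΓ0 : ∀ x : D, Γ 0 x = 1)
    (B₀ : A) (M : D → A)
    (hlim : ∀ x : D, Tendsto (fun s : ℝ => exp ((-s) • B₀) * Γ s x) atTop (nhds (M x))) :
    ∀ t : ℝ, 0 ≤ t → ∀ x : D, M (F t x) * Γ t x = exp (t • B₀) * M x := by
  intro t ht x
  have h1 : Tendsto (fun s : ℝ => exp ((-s) • B₀) * Γ s (F t x) * Γ t x) atTop
      (nhds (M (F t x) * Γ t x)) := (hlim (F t x)).mul_const _
  have h2 : Tendsto (fun s : ℝ => exp (t • B₀) * (exp ((-(s + t)) • B₀) * Γ (s + t) x))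
      atTop (nhds (exp (t • B₀) * M x)) :=
    (((hlim x).comp (tendsto_atTop_add_const_right atTop t tendsto_id))).const_mul _
  have heq : ∀ᶠ s : ℝ in atTop,
      exp ((-s) • B₀) * Γ s (F t x) * Γ t x
        = exp (t • B₀) * (exp ((-(s + t)) • B₀) * Γ (s + t) x) := by
    filter_upwards [eventually_ge_atTop (0 : ℝ)] with s hs
    have hc : Commute (t • B₀) ((-(s + t)) • B₀) := ((Commute.refl B₀).smul_left _).smul_right _
    have hexp : exp (t • B₀) * exp ((-(s + t)) • B₀) = exp ((-s) • B₀) := by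
      rw [← exp_add_of_commute_of_mem_ball (𝕂 := ℂ) hc ((expSeries_radius_eq_top ℂ A).symm ▸ edist_lt_top _ _)
        ((expSeries_radius_eq_top ℂ A).symm ▸ edist_lt_top _ _), ← add_smul]
      ring_nf
    rw [mul_assoc, hΓchain s t hs ht x, ← hexp, mul_assoc]
  exact tendsto_nhds_unique (h1.congr' heq) h2
end

section
/- Let A be a complex unital Banach algebra, B₀ ∈ A, and B̃(t) := exp(−tB₀)·b(t)·exp(tB₀) − B₀ where b : [0,∞) → A satisfies ‖b(t) − B₀‖ ≤ C e^{−αt} for constants C > 0, α > 0 and all t ≥ t*. If moreover κ₊(B₀) − κ₋(B₀) < α (with κ± the exponential indices), then ∫_{t*}^∞ ‖B̃(t)‖ dt < ∞. -/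
open NormedSpace Filter MeasureTheory Nat

private lemma aux_norm_exp_le {A : Type*} [NormedRing A] [NormedAlgebra ℂ A]
    [CompleteSpace A] [NormOneClass A] (x : A) : ‖exp x‖ ≤ Real.exp ‖x‖ := by
  rw [Real.exp_eq_exp_ℝ, NormedSpace.exp_eq_tsum ℂ (𝔸 := A), NormedSpace.exp_eq_tsum ℝ (𝔸 := ℝ)]
  calc ‖∑' n : ℕ, (n !⁻¹ : ℂ) • x ^ n‖
      ≤ ∑' n : ℕ, ‖(n !⁻¹ : ℂ) • x ^ n‖ :=
        norm_tsum_le_tsum_norm (norm_expSeries_summable' x)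
    _ ≤ ∑' n : ℕ, (n !⁻¹ : ℝ) • ‖x‖ ^ n := by
        refine Summable.tsum_le_tsum (fun n => ?_) (norm_expSeries_summable' x) ?_
        · rw [norm_smul, smul_eq_mul]
          have h1 : ‖(n !⁻¹ : ℂ)‖ = (n !⁻¹ : ℝ) := by
            simp [norm_inv, Complex.norm_natCast]
          rw [h1]
          have h2 : ‖x ^ n‖ ≤ ‖x‖ ^ n := by
            cases n with
            | zero => simp
            | succ m => exact norm_pow_le' x m.succ_pos
          gcongr
        · simpa using norm_expSeries_summable' (𝕂 := ℝ) ‖x‖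

private lemma aux_le_exp {x y : ℝ} (h : Real.log x ≤ y) (hx : 0 ≤ x) :
    x ≤ Real.exp y := by
  rcases hx.eq_or_lt with h0 | h0
  · exact (le_of_eq h0.symm).trans (Real.exp_pos y).le
  · exact (Real.log_le_iff_le_exp h0).mp h

private lemma aux_log_le {x y : ℝ} (h : x ≤ Real.exp y) (hx : 0 ≤ x) (hy : 0 ≤ y) :
    Real.log x ≤ y := by
  rcases hx.eq_or_lt with h0 | h0
  · rw [← h0, Real.log_zero]; exact hy
  · exact (Real.log_le_iff_le_exp h0).mpr h

/-- If `‖b(t) − B₀‖ ≤ Ce^{−αt}` for `t ≥ t*` and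
`κ₊(B₀) − κ₋(B₀) < α` (exponential Lyapunov indices), then
`∫_{t*}^∞ ‖e^{−tB₀} b(t) e^{tB₀} − B₀‖ dt < ∞`. -/
theorem stmt_16 {A : Type*} [NormedRing A] [NormedAlgebra ℂ A] [CompleteSpace A]
    [NormOneClass A]
    (B₀ : A) (b : ℝ → A) (C α tstar : ℝ) (hC : 0 < C) (hα : 0 < α)
    (hb : ∀ t : ℝ, tstar ≤ t → ‖b t - B₀‖ ≤ C * Real.exp (-α * t))
    (κp κm : ℝ)
    (hκp : κp = limsup (fun t : ℝ => Real.log ‖exp (t • B₀)‖ / t) atTop)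
    (hκm : κm = -limsup (fun t : ℝ => Real.log ‖exp ((-t) • B₀)‖ / t) atTop)
    (hgap : κp - κm < α)
    (Bt : ℝ → A)
    (hBt : ∀ t : ℝ, Bt t = exp ((-t) • B₀) * b t * exp (t • B₀) - B₀) :
    ∫⁻ t in Set.Ici tstar, ENNReal.ofReal ‖Bt t‖ < ⊤ := by
  -- basic exponential norm bounds
  have hnorm1 : ∀ t : ℝ, ‖exp (t • B₀)‖ ≤ Real.exp (|t| * ‖B₀‖) := by
    intro t
    have := aux_norm_exp_le (t • B₀)
    rwa [norm_smul, Real.norm_eq_abs] at this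
  have hnorm2 : ∀ t : ℝ, ‖exp ((-t) • B₀)‖ ≤ Real.exp (|t| * ‖B₀‖) := by
    intro t
    have := aux_norm_exp_le ((-t) • B₀)
    rwa [norm_smul, Real.norm_eq_abs, abs_neg] at this
  -- boundedness of the limsup functions
  have hbdd1 : IsBoundedUnder (· ≤ ·) atTop
      (fun t : ℝ => Real.log ‖exp (t • B₀)‖ / t) := by
    refine ⟨‖B₀‖, eventually_map.mpr ?_⟩
    filter_upwards [eventually_ge_atTop (1 : ℝ)] with t ht
    have ht0 : (0 : ℝ) < t := lt_of_lt_of_le one_pos ht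
    have hlog : Real.log ‖exp (t • B₀)‖ ≤ t * ‖B₀‖ := by
      refine aux_log_le ?_ (norm_nonneg _) (by positivity)
      have := hnorm1 t
      rwa [abs_of_pos ht0] at this
    rw [div_le_iff₀ ht0]
    calc Real.log ‖exp (t • B₀)‖ ≤ t * ‖B₀‖ := hlog
      _ = ‖B₀‖ * t := by ring
  have hbdd2 : IsBoundedUnder (· ≤ ·) atTop
      (fun t : ℝ => Real.log ‖exp ((-t) • B₀)‖ / t) := by
    refine ⟨‖B₀‖, eventually_map.mpr ?_⟩
    filter_upwards [eventually_ge_atTop (1 : ℝ)] with t ht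
    have ht0 : (0 : ℝ) < t := lt_of_lt_of_le one_pos ht
    have hlog : Real.log ‖exp ((-t) • B₀)‖ ≤ t * ‖B₀‖ := by
      refine aux_log_le ?_ (norm_nonneg _) (by positivity)
      have := hnorm2 t
      rwa [abs_of_pos ht0] at this
    rw [div_le_iff₀ ht0]
    calc Real.log ‖exp ((-t) • B₀)‖ ≤ t * ‖B₀‖ := hlog
      _ = ‖B₀‖ * t := by ring
  -- choose ε
  obtain ⟨ε, hε, hεeq⟩ : ∃ ε : ℝ, 0 < ε ∧ κp - κm + 2 * ε - α = -(2 * ε) :=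
    ⟨(α - (κp - κm)) / 4, by linarith, by ring⟩
  obtain ⟨β, hβpos, hβeq⟩ : ∃ β : ℝ, 0 < β ∧ κp - κm + 2 * ε - α = -β :=
    ⟨2 * ε, by positivity, hεeq⟩
  -- eventual bounds from the limsups
  have h1 : ∀ᶠ t in atTop, Real.log ‖exp (t • B₀)‖ / t < κp + ε := by
    apply eventually_lt_of_limsup_lt _ hbdd1
    rw [← hκp]; linarith
  have h2 : ∀ᶠ t in atTop, Real.log ‖exp ((-t) • B₀)‖ / t < -κm + ε := by
    apply eventually_lt_of_limsup_lt _ hbdd2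
    have : limsup (fun t : ℝ => Real.log ‖exp ((-t) • B₀)‖ / t) atTop = -κm := by
      rw [hκm]; ring
    rw [this]; linarith
  obtain ⟨T₀, hT₀⟩ := eventually_atTop.mp (h1.and h2)
  set T : ℝ := max T₀ (max tstar 1) with hTdef
  have hTtstar : tstar ≤ T := le_trans (le_max_left _ _) (le_max_right _ _)
  have hT1 : (1 : ℝ) ≤ T := le_trans (le_max_right _ _) (le_max_right _ _)
  -- decomposition of Bt
  have key : ∀ t : ℝ, Bt t = exp ((-t) • B₀) * (b t - B₀) * exp (t • B₀) := by
    intro t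
    have hcomm : Commute ((-t) • B₀ : A) (t • B₀) :=
      ((Commute.refl B₀).smul_left _).smul_right _
    have hinv : exp ((-t) • B₀ : A) * exp (t • B₀) = 1 := by
      let +nondep : NormedAlgebra ℚ A := .restrictScalars ℚ ℂ A
      rw [← exp_add_of_commute hcomm, ← add_smul]
      norm_num
    have hc : Commute B₀ (exp (t • B₀)) :=
      Commute.exp_right ((Commute.refl B₀).smul_right t)
    have hmid : exp ((-t) • B₀ : A) * B₀ * exp (t • B₀) = B₀ := by
      rw [mul_assoc, hc.eq, ← mul_assoc, hinv, one_mul]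
    rw [hBt, mul_sub, sub_mul, hmid]
  -- pointwise norm bound from the factorization, for t ≥ tstar
  have hfac : ∀ t : ℝ, tstar ≤ t →
      ‖Bt t‖ ≤ ‖exp ((-t) • B₀)‖ * ‖b t - B₀‖ * ‖exp (t • B₀)‖ := by
    intro t ht
    rw [key t]
    calc ‖exp ((-t) • B₀) * (b t - B₀) * exp (t • B₀)‖
        ≤ ‖exp ((-t) • B₀) * (b t - B₀)‖ * ‖exp (t • B₀)‖ := norm_mul_le _ _
      _ ≤ ‖exp ((-t) • B₀)‖ * ‖b t - B₀‖ * ‖exp (t • B₀)‖ := by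
          gcongr
          exact norm_mul_le _ _
  -- constants for the compact region [tstar, T]
  set R : ℝ := |tstar| + |T| with hRdef
  have hR0 : 0 ≤ R := by positivity
  set K : ℝ := C * Real.exp ((2 * ‖B₀‖ + α) * R) with hKdef
  have hK0 : 0 < K := by positivity
  set M : ℝ := (K + C) * Real.exp (β * R) with hMdef
  have hM0 : 0 < M := by positivity
  -- main pointwise bound
  have main : ∀ t : ℝ, tstar ≤ t → ‖Bt t‖ ≤ M * Real.exp (-β * t) := by
    intro t ht
    rcases le_or_gt T t with hTt | hTt
    · -- tail region: use the limsup bounds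
      obtain ⟨hl1, hl2⟩ := hT₀ t (le_trans (le_max_left _ _) hTt)
      have ht0 : (0 : ℝ) < t := lt_of_lt_of_le one_pos (le_trans hT1 hTt)
      have hE1 : ‖exp (t • B₀)‖ ≤ Real.exp (t * (κp + ε)) := by
        refine aux_le_exp ?_ (norm_nonneg _)
        have := (div_lt_iff₀ ht0).mp hl1
        linarith [this]
      have hE2 : ‖exp ((-t) • B₀)‖ ≤ Real.exp (t * (-κm + ε)) := by
        refine aux_le_exp ?_ (norm_nonneg _)
        have := (div_lt_iff₀ ht0).mp hl2
        linarith [this]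
      have hbb := hb t ht
      calc ‖Bt t‖ ≤ ‖exp ((-t) • B₀)‖ * ‖b t - B₀‖ * ‖exp (t • B₀)‖ := hfac t ht
        _ ≤ Real.exp (t * (-κm + ε)) * (C * Real.exp (-α * t)) *
              Real.exp (t * (κp + ε)) := by
            gcongr
        _ = C * Real.exp (t * (-κm + ε) + -α * t + t * (κp + ε)) := by
            rw [Real.exp_add, Real.exp_add]; ring
        _ = C * Real.exp (-β * t) := by
            congr 2
            calc t * (-κm + ε) + -α * t + t * (κp + ε)
                = t * (κp - κm + 2 * ε - α) := by ring
              _ = t * (-β) := by rw [hβeq]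
              _ = -β * t := by ring
        _ ≤ M * Real.exp (-β * t) := by
            gcongr
            have h1' : (1 : ℝ) ≤ Real.exp (β * R) := Real.one_le_exp (by positivity)
            calc C ≤ K + C := by linarith
              _ = (K + C) * 1 := by ring
              _ ≤ (K + C) * Real.exp (β * R) := by
                  gcongr
    · -- compact region: crude bound
      have htR : |t| ≤ R := by
        rw [abs_le]
        constructor
        · calc -R ≤ -|tstar| := by
                rw [hRdef]; have := abs_nonneg T; linarith
            _ ≤ tstar := neg_abs_le tstar
            _ ≤ t := ht
        · calc t ≤ T := hTt.le
            _ ≤ |T| := le_abs_self T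
            _ ≤ R := by rw [hRdef]; have := abs_nonneg tstar; linarith
      have hbb := hb t ht
      have hBtK : ‖Bt t‖ ≤ K := by
        calc ‖Bt t‖ ≤ ‖exp ((-t) • B₀)‖ * ‖b t - B₀‖ * ‖exp (t • B₀)‖ := hfac t ht
          _ ≤ Real.exp (|t| * ‖B₀‖) * (C * Real.exp (-α * t)) *
                Real.exp (|t| * ‖B₀‖) := by
              gcongr <;>
                first
                  | exact hnorm2 t
                  | exact hnorm1 t
          _ = C * Real.exp (|t| * ‖B₀‖ + -α * t + |t| * ‖B₀‖) := by
              rw [Real.exp_add, Real.exp_add]; ring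
          _ ≤ C * Real.exp ((2 * ‖B₀‖ + α) * R) := by
              gcongr
              have habs : -α * t ≤ α * R := by
                have h1' : -t ≤ |t| := neg_le_abs t
                have h2' : α * (-t) ≤ α * |t| := by gcongr
                have h3' : α * |t| ≤ α * R := by gcongr
                nlinarith
              have hB0 : |t| * ‖B₀‖ ≤ R * ‖B₀‖ := by
                gcongr
              nlinarith [norm_nonneg B₀]
          _ = K := rfl
      calc ‖Bt t‖ ≤ K := hBtK
        _ ≤ (K + C) * Real.exp (β * R) * Real.exp (-β * t) := by
            rw [mul_assoc, ← Real.exp_add]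
            have h1' : (1 : ℝ) ≤ Real.exp (β * R + -β * t) := by
              apply Real.one_le_exp
              have htR' : t ≤ R := (le_abs_self t).trans htR
              nlinarith
            nlinarith
        _ = M * Real.exp (-β * t) := rfl
  -- dominating function and conclusion
  have hint : IntegrableOn (fun t : ℝ => M * Real.exp (-β * t)) (Set.Ici tstar) := by
    rw [integrableOn_Ici_iff_integrableOn_Ioi]
    exact (exp_neg_integrableOn_Ioi tstar hβpos).const_mul M
  calc ∫⁻ t in Set.Ici tstar, ENNReal.ofReal ‖Bt t‖
      ≤ ∫⁻ t in Set.Ici tstar, ENNReal.ofReal (M * Real.exp (-β * t)) := by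
        refine setLIntegral_mono ?_ ?_
        · exact (measurable_const.mul (Real.measurable_exp.comp
            ((measurable_const.mul measurable_id')))).ennreal_ofReal
        · intro t ht
          exact ENNReal.ofReal_le_ofReal (main t ht)
    _ < ⊤ := hint.setLIntegral_lt_top
end

section
/- Let c₀ be the space of complex sequences converging to 0 with sup-norm, F_t(x)_k = e^{−t/k} x_k the diagonal semigroup on the open unit ball D of c₀, and M(x) = exp(Σ_{k≥1} (2x_k)^k) (a well-defined nonzero complex number for ‖x‖ < 1). Then for every polynomial map N : c₀ → ℂ bounded on the unit ball with |N(y) − 1| ≤ C‖y‖ for some C > 0, the convergence N(F_t(x))·M(F_t(x))⁻¹ → 1 as t → ∞ fails to be uniform on the closed ball of radius 1/2: for the points x⁽ⁿ⁾ = (1/2,…,1/2,0,0,…) (n halves) one has M(F_t(x⁽ⁿ⁾))⁻¹ = e^{−n e^{−t}} and |N(F_t(x⁽ⁿ⁾))M(F_t(x⁽ⁿ⁾))⁻¹ − 1| ≥ 1 − e^{−n e^{−t}}(1 + C/2) for all t > 0. -/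
open scoped ZeroAtInfty
open Filter

lemma c0_norm_le (f : C₀(ℕ, ℂ)) {c : ℝ} (hc : 0 ≤ c) (h : ∀ k, ‖f k‖ ≤ c) : ‖f‖ ≤ c := by
  rw [← ZeroAtInftyContinuousMap.norm_toBCF_eq_norm]
  exact (BoundedContinuousFunction.norm_le hc).2 h

/-- On the unit ball of `c₀` (here `C₀(ℕ, ℂ)`, with `x_k = x (k-1)` in
0-based indexing), with `F_t(x)_k = e^{-t/k}x_k` and `M(x) = exp(Σ_k (2x_k)^k)`, for any
map `N` with `|N(y) − 1| ≤ C‖y‖` on the unit ball, the points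
`x⁽ⁿ⁾ = (1/2,…,1/2,0,…)` satisfy `M(F_t(x⁽ⁿ⁾))⁻¹ = e^{−n e^{−t}}` and
`|N(F_t(x⁽ⁿ⁾))M(F_t(x⁽ⁿ⁾))⁻¹ − 1| ≥ 1 − e^{−n e^{−t}}(1 + C/2)`; consequently
`N(F_t(x))·M(F_t(x))⁻¹ → 1` fails to hold uniformly on the closed ball of radius 1/2. -/
theorem stmt_17
    (F : ℝ → C₀(ℕ, ℂ) → C₀(ℕ, ℂ))
    (hF : ∀ (t : ℝ) (x : C₀(ℕ, ℂ)) (k : ℕ),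
      (F t x) k = Complex.exp (-(t : ℂ) / (k + 1)) * x k)
    (M : C₀(ℕ, ℂ) → ℂ)
    (hM : ∀ x : C₀(ℕ, ℂ), M x = Complex.exp (∑' k : ℕ, (2 * x k) ^ (k + 1)))
    (xn : ℕ → C₀(ℕ, ℂ))
    (hxn : ∀ n k : ℕ, (xn n) k = if k < n then (1 / 2 : ℂ) else 0)
    (N : C₀(ℕ, ℂ) → ℂ) (C : ℝ) (hC : 0 < C)
    (hN : ∀ y : C₀(ℕ, ℂ), ‖y‖ ≤ 1 → ‖N y - 1‖ ≤ C * ‖y‖) :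
    (∀ (n : ℕ) (t : ℝ), 0 < t →
      (M (F t (xn n)))⁻¹ = Complex.exp (-(n : ℂ) * Real.exp (-t)) ∧
      ‖N (F t (xn n)) * (M (F t (xn n)))⁻¹ - 1‖ ≥
        1 - Real.exp (-(n : ℝ) * Real.exp (-t)) * (1 + C / 2)) ∧
    ¬ TendstoUniformlyOn (fun (t : ℝ) (x : C₀(ℕ, ℂ)) => N (F t x) * (M (F t x))⁻¹)
        (fun _ => (1 : ℂ)) atTop (Metric.closedBall 0 (1 / 2)) := by
  have main : ∀ (n : ℕ) (t : ℝ), 0 < t →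
      (M (F t (xn n)))⁻¹ = Complex.exp (-(n : ℂ) * Real.exp (-t)) ∧
      ‖N (F t (xn n)) * (M (F t (xn n)))⁻¹ - 1‖ ≥
        1 - Real.exp (-(n : ℝ) * Real.exp (-t)) * (1 + C / 2) := by
    intro n t ht
    -- value of M
    have hMval : M (F t (xn n)) = Complex.exp ((n : ℂ) * Real.exp (-t)) := by
      rw [hM]
      congr 1
      have hsum : ∑' k : ℕ, (2 * (F t (xn n)) k) ^ (k + 1)
          = ∑ k ∈ Finset.range n, (2 * (F t (xn n)) k) ^ (k + 1) := by
        apply tsum_eq_sum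
        intro k hk
        rw [hF, hxn, if_neg (by simpa using hk)]
        simp
      rw [hsum]
      have hterm : ∀ k ∈ Finset.range n,
          (2 * (F t (xn n)) k) ^ (k + 1) = ((Real.exp (-t) : ℝ) : ℂ) := by
        intro k hk
        rw [hF, hxn, if_pos (Finset.mem_range.mp hk)]
        have h2 : (2 : ℂ) * (Complex.exp (-(t : ℂ) / (k + 1)) * (1 / 2))
            = Complex.exp (-(t : ℂ) / (k + 1)) := by ring
        rw [h2, ← Complex.exp_nat_mul]
        have hne : ((k : ℂ) + 1) ≠ 0 := Nat.cast_add_one_ne_zero k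
        rw [show ((k + 1 : ℕ) : ℂ) * (-(t : ℂ) / (k + 1)) = -(t : ℂ) by
          push_cast; field_simp]
        rw [Complex.ofReal_exp, Complex.ofReal_neg]
      rw [Finset.sum_congr rfl hterm]
      simp [Finset.sum_const]
    have hMinv : (M (F t (xn n)))⁻¹ = Complex.exp (-(n : ℂ) * Real.exp (-t)) := by
      rw [hMval, ← Complex.exp_neg]
      ring_nf
    refine ⟨hMinv, ?_⟩
    -- norm bound on y = F t (xn n)
    set y := F t (xn n) with hy
    have hynorm : ‖y‖ ≤ 1 / 2 := by
      apply c0_norm_le _ (by norm_num)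
      intro k
      rw [hy, hF, hxn]
      by_cases hk : k < n
      · rw [if_pos hk]
        rw [norm_mul, Complex.norm_exp]
        have hre : (-(t : ℂ) / (k + 1)).re = -t / (k + 1) := by
          rw [show -(t : ℂ) / (k + 1) = ((-t / (k + 1) : ℝ) : ℂ) by push_cast; ring]
          exact Complex.ofReal_re _
        rw [hre]
        have : Real.exp (-t / (k + 1)) ≤ 1 := by
          apply Real.exp_le_one_iff.mpr
          apply div_nonpos_of_nonpos_of_nonneg (by linarith) (by positivity)
        have h12 : ‖(1 / 2 : ℂ)‖ = 1 / 2 := by norm_num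
        rw [h12]
        nlinarith [Real.exp_pos (-t / (k + 1))]
      · rw [if_neg hk]; simp
    have hNy : ‖N y‖ ≤ 1 + C / 2 := by
      have h1 := hN y (by linarith)
      have h2 : ‖N y‖ ≤ ‖N y - 1‖ + 1 := by
        calc ‖N y‖ = ‖(N y - 1) + 1‖ := by ring_nf
        _ ≤ ‖N y - 1‖ + ‖(1 : ℂ)‖ := norm_add_le _ _
        _ = ‖N y - 1‖ + 1 := by simp
      nlinarith [mul_le_mul_of_nonneg_left hynorm (le_of_lt hC)]
    have hMinvabs : ‖(M y)⁻¹‖ = Real.exp (-(n : ℝ) * Real.exp (-t)) := by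
      rw [hMinv, Complex.norm_exp]
      congr 1
      rw [show (-(n : ℂ) * ((Real.exp (-t) : ℝ) : ℂ))
          = ((-(n : ℝ) * Real.exp (-t) : ℝ) : ℂ) by push_cast; ring, Complex.ofReal_re]
    calc ‖N y * (M y)⁻¹ - 1‖
        ≥ ‖(1 : ℂ)‖ - ‖N y * (M y)⁻¹‖ := by
          have h := norm_sub_norm_le (1 : ℂ) (N y * (M y)⁻¹)
          rw [norm_sub_rev] at h
          simpa using h
      _ ≥ 1 - Real.exp (-(n : ℝ) * Real.exp (-t)) * (1 + C / 2) := by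
          rw [norm_mul, hMinvabs]
          simp only [norm_one]
          nlinarith [Real.exp_pos (-(n : ℝ) * Real.exp (-t)), hNy,
            norm_nonneg (N y)]
  refine ⟨main, ?_⟩
  intro hu
  rw [Metric.tendstoUniformlyOn_iff] at hu
  obtain ⟨a, ha⟩ := (hu (1/2) (by norm_num)).exists_forall_of_atTop
  set t := max a 1 with htdef
  have hta : a ≤ t := le_max_left _ _
  have ht : 0 < t := lt_of_lt_of_le one_pos (le_max_right _ _)
  have hta' := ha t hta
  -- choose n large
  have hto : Filter.Tendsto (fun n : ℕ => Real.exp (-(n : ℝ) * Real.exp (-t)) * (1 + C / 2))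
      atTop (nhds 0) := by
    have h1 : Filter.Tendsto (fun n : ℕ => (n : ℝ) * Real.exp (-t)) atTop atTop :=
      Filter.Tendsto.atTop_mul_const (Real.exp_pos _) tendsto_natCast_atTop_atTop
    have h2 : Filter.Tendsto (fun n : ℕ => Real.exp (-((n : ℝ) * Real.exp (-t))))
        atTop (nhds 0) := Real.tendsto_exp_neg_atTop_nhds_zero.comp h1
    have := h2.mul_const (1 + C / 2)
    simpa [neg_mul] using this
  have hev : ∀ᶠ n : ℕ in atTop,
      Real.exp (-(n : ℝ) * Real.exp (-t)) * (1 + C / 2) < 1 / 2 :=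
    hto.eventually_lt_const (by norm_num)
  obtain ⟨n, hn⟩ := hev.exists
  have hxmem : xn n ∈ Metric.closedBall (0 : C₀(ℕ, ℂ)) (1 / 2) := by
    rw [Metric.mem_closedBall, dist_zero_right]
    apply c0_norm_le _ (by norm_num)
    intro k
    rw [hxn]
    by_cases hk : k < n
    · rw [if_pos hk]; norm_num
    · rw [if_neg hk]; simp
  have hdist := hta' (xn n) hxmem
  have hlb := (main n t ht).2
  rw [dist_comm, Complex.dist_eq] at hdist
  have : ‖N (F t (xn n)) * (M (F t (xn n)))⁻¹ - 1‖ < 1 / 2 := hdist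
  linarith
end

section
/- Let D be the open unit ball of c₀ and Γ_t(x) = exp(Σ_{k=1}^∞ (2x_k)^k (1 − e^{−tk})), F_t(x) = e^{−t}x. Then {Γ_t} is a semicocycle over {F_t}: Γ_t(F_s(x))·Γ_s(x) = Γ_{t+s}(x) and Γ_0 ≡ 1; moreover Γ_t(x) = M(e^{−t}x)⁻¹ · M(x) where M(x) = exp(Σ_{k=1}^∞ (2x_k)^k). -/
open scoped ZeroAtInfty

lemma aux_summable18 (x : C₀(ℕ, ℂ)) (c : ℕ → ℂ) (hc : ∀ k, ‖c k‖ ≤ 2) :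
    Summable (fun k : ℕ => (2 * x k) ^ (k + 1) * c k) := by
  have hx : Filter.Tendsto x Filter.atTop (nhds 0) := by
    have := zero_at_infty x
    rwa [Filter.cocompact_eq_cofinite, Nat.cofinite_eq_atTop] at this
  have hev : ∀ᶠ k in Filter.atTop, ‖x k‖ ≤ 1/4 := by
    have := hx.eventually (Metric.ball_mem_nhds (0 : ℂ) (by norm_num : (0:ℝ) < 1/4))
    filter_upwards [this] with k hk
    simpa [dist_eq_norm] using hk.le
  apply Summable.of_norm_bounded_eventually_nat (g := fun k => 2 * (1/2 : ℝ) ^ (k + 1))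
  · exact (summable_geometric_of_lt_one (by norm_num : (0:ℝ) ≤ 1/2) (by norm_num)).mul_left 2
      |>.comp_injective (add_left_injective 1) |>.congr (by intro k; rfl)
  · filter_upwards [hev] with k hk
    have h1 : ‖(2 * x k) ^ (k+1)‖ ≤ (1/2 : ℝ) ^ (k+1) := by
      rw [norm_pow]
      apply pow_le_pow_left₀ (norm_nonneg _)
      rw [norm_mul]
      calc ‖(2:ℂ)‖ * ‖x k‖ ≤ 2 * (1/4) := by
            apply mul_le_mul _ hk (norm_nonneg _) (by norm_num)
            simp
        _ = 1/2 := by norm_num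
    calc ‖(2 * x k) ^ (k+1) * c k‖ = ‖(2 * x k) ^ (k+1)‖ * ‖c k‖ := norm_mul _ _
      _ ≤ (1/2:ℝ)^(k+1) * 2 := mul_le_mul h1 (hc k) (norm_nonneg _) (by positivity)
      _ = 2 * (1/2:ℝ)^(k+1) := by ring

lemma smul_term18 (x : C₀(ℕ, ℂ)) (s : ℝ) (k : ℕ) :
    (2 * (((Real.exp (-s) : ℂ)) • x) k) ^ (k + 1)
      = (2 * x k) ^ (k + 1) * Complex.exp (-(s : ℂ) * (k + 1)) := by
  have h1 : (((Real.exp (-s) : ℝ)) : ℂ) = Complex.exp (-(s:ℂ)) := by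
    rw [Complex.ofReal_exp, Complex.ofReal_neg]
  have h2 : Complex.exp (-(s:ℂ)) ^ (k+1) = Complex.exp (-(s:ℂ) * (k+1)) := by
    rw [← Complex.exp_nat_mul]
    congr 1
    push_cast
    ring
  calc (2 * (((Real.exp (-s) : ℂ)) • x) k) ^ (k + 1)
      = ((Real.exp (-s) : ℂ) * (2 * x k)) ^ (k + 1) := by
        congr 1
        simp [ZeroAtInftyContinuousMap.coe_smul]
        ring
    _ = (2 * x k) ^ (k+1) * Complex.exp (-(s:ℂ) * (k+1)) := by
        rw [mul_pow, h1, h2]; ring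

lemma normE18 (t : ℝ) (ht : 0 ≤ t) (k : ℕ) : ‖Complex.exp (-(t:ℂ) * (k+1))‖ ≤ 1 := by
  rw [Complex.norm_exp]
  apply Real.exp_le_one_iff.2
  have : (-(t:ℂ) * (k+1)).re = -t * (k+1) := by
    simp [Complex.mul_re]
  rw [this]
  have : (0:ℝ) ≤ (k:ℝ)+1 := by positivity
  nlinarith

/-- On the open unit ball of `c₀ = C₀(ℕ, ℂ)` (0-based indexing, `x_k = x (k-1)`),
`Γ_t(x) = exp(Σ_k (2x_k)^k(1 − e^{−tk}))` is a semicocycle over `F_t(x) = e^{−t}x`, and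
`Γ_t(x) = M(e^{−t}x)⁻¹·M(x)` with `M(x) = exp(Σ_k (2x_k)^k)`. -/
theorem stmt_18
    (Γ : ℝ → C₀(ℕ, ℂ) → ℂ)
    (hΓ : ∀ (t : ℝ) (x : C₀(ℕ, ℂ)), Γ t x =
      Complex.exp (∑' k : ℕ, (2 * x k) ^ (k + 1) * (1 - Complex.exp (-(t : ℂ) * (k + 1)))))
    (M : C₀(ℕ, ℂ) → ℂ)
    (hM : ∀ x : C₀(ℕ, ℂ), M x = Complex.exp (∑' k : ℕ, (2 * x k) ^ (k + 1))) :
    ∀ x : C₀(ℕ, ℂ), ‖x‖ < 1 →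
      (∀ t s : ℝ, 0 ≤ t → 0 ≤ s →
        Γ t ((Real.exp (-s) : ℂ) • x) * Γ s x = Γ (t + s) x) ∧
      Γ 0 x = 1 ∧
      (∀ t : ℝ, 0 ≤ t → Γ t x = (M ((Real.exp (-t) : ℂ) • x))⁻¹ * M x) := by
  intro x hx
  set a : ℕ → ℂ := fun k => (2 * x k) ^ (k + 1) with ha
  have S0 : Summable a := by
    have := aux_summable18 x (fun _ => 1) (fun k => by norm_num)
    simpa using this
  have SE : ∀ t : ℝ, 0 ≤ t → Summable (fun k => a k * Complex.exp (-(t:ℂ) * (k+1))) :=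
    fun t ht => aux_summable18 x _ (fun k => (normE18 t ht k).trans (by norm_num))
  have S1 : ∀ t : ℝ, 0 ≤ t →
      Summable (fun k => a k * (1 - Complex.exp (-(t:ℂ) * (k+1)))) := by
    intro t ht
    apply aux_summable18 x _ (fun k => ?_)
    calc ‖1 - Complex.exp (-(t:ℂ) * (k+1))‖ ≤ ‖(1:ℂ)‖ + ‖Complex.exp (-(t:ℂ) * (k+1))‖ :=
          norm_sub_le _ _
      _ ≤ 1 + 1 := by simpa using normE18 t ht k
      _ = 2 := by norm_num
  have S1' : ∀ t s : ℝ, 0 ≤ t → 0 ≤ s →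
      Summable (fun k => a k * (Complex.exp (-(s:ℂ)*(k+1)) * (1 - Complex.exp (-(t:ℂ) * (k+1))))) := by
    intro t s ht hs
    apply aux_summable18 x _ (fun k => ?_)
    calc ‖Complex.exp (-(s:ℂ)*(k+1)) * (1 - Complex.exp (-(t:ℂ) * (k+1)))‖
        ≤ 1 * 2 := by
          rw [norm_mul]
          apply mul_le_mul (normE18 s hs k) ?_ (norm_nonneg _) zero_le_one
          calc ‖1 - Complex.exp (-(t:ℂ) * (k+1))‖ ≤ ‖(1:ℂ)‖ + ‖Complex.exp (-(t:ℂ) * (k+1))‖ :=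
                norm_sub_le _ _
            _ ≤ 1 + 1 := by simpa using normE18 t ht k
            _ = 2 := by norm_num
      _ = 2 := by norm_num
  refine ⟨?_, ?_, ?_⟩
  · -- semicocycle
    intro t s ht hs
    rw [hΓ, hΓ, hΓ, ← Complex.exp_add]
    congr 1
    have hL : (∑' k : ℕ, (2 * (((Real.exp (-s) : ℂ)) • x) k) ^ (k + 1) *
        (1 - Complex.exp (-(t:ℂ) * (k+1))))
        = ∑' k : ℕ, a k * (Complex.exp (-(s:ℂ)*(k+1)) * (1 - Complex.exp (-(t:ℂ) * (k+1)))) := by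
      apply tsum_congr
      intro k
      rw [smul_term18]
      ring
    rw [hL, ← Summable.tsum_add (S1' t s ht hs) (S1 s hs)]
    apply tsum_congr
    intro k
    have hmul : Complex.exp (-(s:ℂ)*(k+1)) * Complex.exp (-(t:ℂ)*(k+1))
        = Complex.exp (-((t+s:ℝ):ℂ)*(k+1)) := by
      rw [← Complex.exp_add]
      congr 1
      push_cast
      ring
    linear_combination (-(a k)) * hmul
  · -- Γ 0 = 1
    rw [hΓ]
    have : ∀ k : ℕ, (2 * x k) ^ (k + 1) * (1 - Complex.exp (-((0:ℝ):ℂ) * (k+1))) = 0 := by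
      intro k
      simp
    rw [tsum_congr this]
    simp
  · -- via M
    intro t ht
    rw [hΓ, hM, hM]
    have hS : (∑' k : ℕ, (2 * (((Real.exp (-t) : ℂ)) • x) k) ^ (k + 1))
        = ∑' k : ℕ, a k * Complex.exp (-(t:ℂ)*(k+1)) := by
      apply tsum_congr
      intro k
      rw [smul_term18]
    rw [hS, inv_mul_eq_div, ← Complex.exp_sub, ← Summable.tsum_sub S0 (SE t ht)]
    congr 1
    apply tsum_congr
    intro k
    ring
end
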